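/- arXiv:1408.0235 — 5 statements merged into one kernel-verified Lean document; each statement's English description precedes it below -/
import Mathlib

section
/- For every positive integer n, the set of odd primes p with χ_p(n) = -1 is finite if and only if n is a perfect square; that is, a positive integer is a quadratic residue of all but finitely many primes if and only if it is a square. -/
open Nat

lemma coprime_of_modeq_one {b t : ℕ} (h : b ≡ 1 [MOD t]) : Nat.Coprime b t := by
  have : Nat.gcd b t = Nat.gcd 1 t := Nat.ModEq.gcd_eq h
  simpa [Nat.Coprime] using this

/-- If `t` is odd, `b ≡ 1 mod 4` and `b ≡ 1 mod t`, then `J(t|b) = 1`. -/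
lemma jacobi_eq_one_of_odd {t b : ℕ} (ht : Odd t) (hb4 : b % 4 = 1)
    (hbt : b ≡ 1 [MOD t]) : jacobiSym (t : ℤ) b = 1 := by
  rw [jacobiSym.quadratic_reciprocity_one_mod_four' ht hb4]
  have h : ((b : ℤ)) % t = (1 : ℤ) % t := by exact_mod_cast hbt
  rw [jacobiSym.mod_left' h, jacobiSym.one_left]

/-- If `t` is squarefree and `b ≡ 1 mod 8t`, then `J(t|b) = 1`. -/
lemma jacobi_eq_one_of_squarefree {t b : ℕ} (ht : Squarefree t)
    (hb : b ≡ 1 [MOD 8 * t]) : jacobiSym (t : ℤ) b = 1 := by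
  have hb8 : b ≡ 1 [MOD 8] := hb.of_dvd ⟨t, rfl⟩
  have hb8' : b % 8 = 1 := by simpa [Nat.ModEq] using hb8
  have hb4 : b % 4 = 1 := by omega
  have hbt : b ≡ 1 [MOD t] := hb.of_dvd ⟨8, Nat.mul_comm 8 t⟩
  rcases Nat.even_or_odd t with he | ho
  · -- t = 2 * t' with t' odd
    obtain ⟨t', rfl⟩ := he
    have ht2 : t' + t' = 2 * t' := by ring
    rw [ht2] at ht hbt ⊢
    have ht' : Odd t' := by
      rcases Nat.even_or_odd t' with h2 | h2
      · exfalso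
        obtain ⟨u, rfl⟩ := h2
        exact (Nat.squarefree_iff_prime_squarefree.mp ht 2 Nat.prime_two
          ⟨u, by ring⟩)
      · exact h2
    have hcast : ((2 * t' : ℕ) : ℤ) = 2 * (t' : ℤ) := by push_cast; ring
    rw [hcast, jacobiSym.mul_left]
    have hbodd : Odd b := by
      refine Nat.odd_iff.mpr ?_
      omega
    have h2b : jacobiSym 2 b = 1 := by
      rw [jacobiSym.at_two hbodd]
      have : (b : ZMod 8) = 1 := by
        rw [← ZMod.natCast_mod b 8, hb8']; norm_num
      rw [this, map_one]
    have ht'b : jacobiSym (t' : ℤ) b = 1 :=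
      jacobi_eq_one_of_odd ht' hb4 (hbt.of_dvd ⟨2, by ring⟩)
    rw [h2b, ht'b]; ring
  · exact jacobi_eq_one_of_odd ho hb4 hbt

/-- For squarefree `k ≥ 2` there is an odd `b` coprime to `k` with `J(k|b) = -1`. -/
lemma exists_jacobiSym_eq_neg_one {k : ℕ} (hk : Squarefree k) (hk2 : 2 ≤ k) :
    ∃ b : ℕ, b % 2 = 1 ∧ Nat.Coprime b k ∧ jacobiSym (k : ℤ) b = -1 := by
  by_cases hq : ∃ q : ℕ, q.Prime ∧ q ∣ k ∧ q ≠ 2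
  · obtain ⟨q, hqp, hqk, hq2⟩ := hq
    haveI : Fact q.Prime := ⟨hqp⟩
    obtain ⟨t, rfl⟩ := hqk
    have hqt : Nat.Coprime q t := by
      by_contra h
      have := (Nat.Prime.coprime_iff_not_dvd hqp).not_left.mp h
      obtain ⟨u, rfl⟩ := this
      exact (Nat.squarefree_iff_prime_squarefree.mp hk q hqp ⟨u, by ring⟩)
    have ht : Squarefree t := hk.squarefree_of_dvd ⟨q, Nat.mul_comm q t⟩
    have hqodd : Odd q := hqp.odd_of_ne_two hq2
    -- nonsquare mod q
    obtain ⟨c, hc⟩ := FiniteField.exists_nonsquare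
      (F := ZMod q) (by rwa [ZMod.ringChar_zmod_n])
    have hco : Nat.Coprime (8 * t) q := by
      refine Nat.Coprime.mul ?_ (hqt.symm)
      have : ¬ q ∣ 8 := fun h => hq2 <|
        (Nat.prime_dvd_prime_iff_eq hqp Nat.prime_two).mp
          (hqp.dvd_of_dvd_pow (show q ∣ 2 ^ 3 from by norm_num at h ⊢; exact h))
      exact ((Nat.Prime.coprime_iff_not_dvd hqp).mpr this).symm
    obtain ⟨b, hb1, hbc⟩ := Nat.chineseRemainder hco 1 c.val
    have hbq : (b : ZMod q) = c := by
      have : (b : ZMod q) = ((c.val : ℕ) : ZMod q) :=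
        (ZMod.natCast_eq_natCast_iff _ _ _).mpr hbc
      rwa [ZMod.natCast_val, ZMod.cast_id] at this
    have hb8 : b % 8 = 1 := by
      have := (hb1.of_dvd ⟨t, rfl⟩ : b ≡ 1 [MOD 8])
      simpa [Nat.ModEq] using this
    have hb4 : b % 4 = 1 := by omega
    have hbodd : b % 2 = 1 := by omega
    have hlq : legendreSym q (b : ℤ) = -1 := by
      rw [legendreSym.eq_neg_one_iff]
      rwa [Int.cast_natCast, hbq]
    have hJq : jacobiSym (q : ℤ) b = -1 := by
      rw [jacobiSym.quadratic_reciprocity_one_mod_four' hqodd hb4,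
        ← jacobiSym.legendreSym.to_jacobiSym]
      exact hlq
    have hJt : jacobiSym (t : ℤ) b = 1 :=
      jacobi_eq_one_of_squarefree ht hb1
    have hbk : Nat.Coprime b (q * t) := by
      refine Nat.Coprime.mul_right ?_ (coprime_of_modeq_one (hb1.of_dvd ⟨8, by ring⟩))
      refine Nat.Coprime.symm ((Nat.Prime.coprime_iff_not_dvd hqp).mpr ?_)
      intro h
      have : (b : ZMod q) = 0 := (ZMod.natCast_eq_zero_iff b q).mpr h
      rw [hbq] at this
      exact hc (this ▸ ⟨0, by ring⟩)
    refine ⟨b, hbodd, hbk, ?_⟩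
    have hcast : ((q * t : ℕ) : ℤ) = (q : ℤ) * t := by push_cast; ring
    rw [hcast, jacobiSym.mul_left, hJq, hJt]; ring
  · -- all prime factors are 2, so k = 2
    push_neg at hq
    have hk2' : k = 2 := by
      by_contra h
      have h2 : (2 : ℕ) ∣ k := by
        rcases (Nat.exists_prime_and_dvd (by omega : k ≠ 1)) with ⟨p, hp, hpk⟩
        rwa [hq p hp hpk] at hpk
      obtain ⟨t, rfl⟩ := h2
      have ht1 : t ≠ 1 := by intro h1; omega
      rcases Nat.exists_prime_and_dvd ht1 with ⟨p, hp, hpt⟩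
      have hp2 : p = 2 := hq p hp (Dvd.dvd.mul_left hpt 2)
      subst hp2
      obtain ⟨u, rfl⟩ := hpt
      exact Nat.squarefree_iff_prime_squarefree.mp hk 2 Nat.prime_two ⟨u, by ring⟩
    subst hk2'
    refine ⟨3, rfl, by norm_num, ?_⟩
    rw [show ((2 : ℕ) : ℤ) = 2 by norm_num, jacobiSym.at_two (by decide)]
    decide

/-- A positive integer is a quadratic residue of all but finitely many primes if and only if
it is a perfect square: the set of odd primes `p` with `χ_p(n) = -1` is finite iff `n` is a
square. -/
theorem finite_setOf_legendreSym_eq_neg_one_iff_isSquare (n : ℕ) (hn : 0 < n) :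
    {p : ℕ | ∃ hp : Fact p.Prime, p ≠ 2 ∧ @legendreSym p hp (n : ℤ) = -1}.Finite ↔ IsSquare n := by
  constructor
  · intro hfin
    by_contra hns
    obtain ⟨k, m, hkm, hk⟩ := Nat.sq_mul_squarefree n
    have hk0 : k ≠ 0 := hk.ne_zero
    have hm0 : m ≠ 0 := by rintro rfl; simp at hkm; omega
    have hk1 : k ≠ 1 := by
      rintro rfl
      exact hns ⟨m, by rw [← hkm]; ring⟩
    have hk2 : 2 ≤ k := by omega
    obtain ⟨b, hbodd, hbk, hJ⟩ := exists_jacobiSym_eq_neg_one hk hk2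
    haveI : NeZero (4 * k) := ⟨by omega⟩
    have hbu : IsUnit ((b : ZMod (4 * k))) := by
      rw [ZMod.isUnit_iff_coprime]
      refine Nat.Coprime.mul_right ?_ hbk
      have : Nat.Coprime b 2 :=
        ((Nat.Prime.coprime_iff_not_dvd Nat.prime_two).mpr
          (Nat.two_dvd_ne_zero.mpr hbodd)).symm
      simpa using this.pow_right 2
    have hinf := Nat.infinite_setOfPred_prime_and_eq_mod hbu
    have hTfin : {p : ℕ | p ∣ m}.Finite := by
      refine Set.Finite.subset (Set.finite_le_nat m) ?_
      intro p hp
      exact Nat.le_of_dvd (by omega) hp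
    have hinf2 := hinf.diff hTfin
    refine hinf2 ?_
    refine Set.Finite.subset hfin ?_
    rintro p ⟨⟨hp, hpb⟩, hpm⟩
    haveI : Fact p.Prime := ⟨hp⟩
    have hmod : p ≡ b [MOD 4 * k] := (ZMod.natCast_eq_natCast_iff _ _ _).mp hpb
    have hmod2 : p % 2 = b % 2 := hmod.of_dvd ⟨2 * k, by ring⟩
    have hp2 : p ≠ 2 := by
      intro h; rw [h] at hmod2; omega
    have hpodd : Odd p := Nat.odd_iff.mpr (by omega)
    have hbodd' : Odd b := Nat.odd_iff.mpr hbodd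
    -- J(k | p) = J(k | b) = -1
    have hJp : legendreSym p (k : ℤ) = -1 := by
      rw [jacobiSym.legendreSym.to_jacobiSym]
      rw [jacobiSym.mod_right (k : ℤ) hpodd]
      rw [jacobiSym.mod_right (k : ℤ) hbodd'] at hJ
      have : p % (4 * (k : ℤ).natAbs) = b % (4 * (k : ℤ).natAbs) := by
        simpa [Nat.ModEq] using hmod
      rw [this]
      exact hJ
    have hpm' : (m : ZMod p) ≠ 0 := by
      rw [Ne, ZMod.natCast_eq_zero_iff]
      exact fun h => hpm h
    refine ⟨‹Fact p.Prime›, hp2, ?_⟩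
    have hcast : ((n : ℕ) : ℤ) = (m : ℤ) * m * k := by
      rw [← hkm]; push_cast; ring
    rw [hcast, legendreSym.mul, legendreSym.mul, hJp]
    have : legendreSym p (m : ℤ) ^ 2 = 1 := legendreSym.sq_one p (by exact_mod_cast hpm')
    nlinarith [this]
  · rintro ⟨r, rfl⟩
    convert Set.finite_empty
    ext p
    simp only [Set.mem_setOf_eq, Set.mem_empty_iff_false, iff_false, not_exists]
    intro hp
    rintro ⟨hp2, hleg⟩
    have hcast : ((r * r : ℕ) : ℤ) = (r : ℤ) * r := by push_cast; ring
    rw [hcast, legendreSym.mul] at hleg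
    nlinarith [hleg, mul_self_nonneg (@legendreSym p hp (r : ℤ))]
end

section
/- For every nonempty finite set S of positive integers, the set of odd primes p such that χ_p(z) = 1 for every z ∈ S is infinite; i.e., every nonempty finite set of positive integers is a set of quadratic residues of infinitely many primes. -/
lemma aux_legendre_one (p : ℕ) [hp : Fact p.Prime] (hp2 : p ≠ 2) :
    ∀ n : ℕ, 0 < n → p ≡ 1 [MOD 8 * n] → legendreSym p (n : ℤ) = 1 := by
  intro n
  induction n using Nat.strong_induction_on with
  | _ n ih =>
    intro hn hmod
    have h8 : p % 8 = 1 := by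
      have : p ≡ 1 [MOD 8] := hmod.of_dvd ⟨n, rfl⟩
      simpa [Nat.ModEq] using this
    rcases eq_or_lt_of_le (show 1 ≤ n from hn) with h1 | h1
    · simp [← h1]
    · -- n > 1
      set q := n.minFac with hq
      have hqp : q.Prime := Nat.minFac_prime (by omega)
      have hqd : q ∣ n := Nat.minFac_dvd n
      obtain ⟨m, hm⟩ := hqd
      have hm0 : 0 < m := by
        have h := hm ▸ hn
        exact Nat.pos_of_ne_zero fun h0 => by simp [h0] at h
      have hmn : m < n := by
        have := hqp.two_le
        calc m < q * m := by nlinarith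
        _ = n := hm.symm
      have hleg_m : legendreSym p (m : ℤ) = 1 := by
        refine ih m hmn hm0 (hmod.of_dvd ?_)
        exact Nat.mul_dvd_mul_left 8 ⟨q, by rw [hm]; ring⟩
      have hpq1 : p ≡ 1 [MOD q] := by
        refine hmod.of_dvd ?_
        exact dvd_mul_of_dvd_right (Nat.minFac_dvd n) 8
      have hleg_q : legendreSym p (q : ℤ) = 1 := by
        rcases eq_or_ne q 2 with h2 | h2
        · rw [h2]
          push_cast
          rw [legendreSym.at_two hp2]
          have := ZMod.χ₈_nat_mod_eight p
          rw [ZMod.χ₈_nat_mod_eight, h8]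
          decide
        · haveI : Fact q.Prime := ⟨hqp⟩
          have hrec := legendreSym.quadratic_reciprocity_one_mod_four (p := p) (q := q) (by omega) h2
          rw [← hrec, legendreSym.mod]
          have hq1 : (1 : ℕ) < q := hqp.one_lt
          have hmodq : p % q = 1 := by
            have := hpq1
            simpa [Nat.ModEq, Nat.mod_eq_of_lt hq1] using this
          have : ((p : ℤ) % (q : ℤ)) = 1 := by
            omega
          rw [this, legendreSym.at_one]
      rw [hm]
      push_cast
      rw [legendreSym.mul, hleg_q, hleg_m, one_mul]

/-- Every nonempty finite set of positive integers is a set of quadratic residues of infinitely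
many primes. -/
theorem infinite_setOf_forall_legendreSym_eq_one (S : Finset ℕ) (hS : S.Nonempty)
    (hpos : ∀ z ∈ S, 0 < z) :
    {p : ℕ | ∃ hp : Fact p.Prime, p ≠ 2 ∧ ∀ z ∈ S, @legendreSym p hp (z : ℤ) = 1}.Infinite := by
  set N : ℕ := 8 * ∏ z ∈ S, z with hN
  have hN0 : N ≠ 0 := by
    have : ∏ z ∈ S, z ≠ 0 := Finset.prod_ne_zero_iff.mpr fun z hz => (hpos z hz).ne'
    positivity
  refine (Nat.infinite_setOf_prime_modEq_one hN0).mono ?_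
  rintro p ⟨hp, hmod⟩
  haveI : Fact p.Prime := ⟨hp⟩
  have h8 : p % 8 = 1 := by
    have : p ≡ 1 [MOD 8] := hmod.of_dvd ⟨∏ z ∈ S, z, rfl⟩
    simpa [Nat.ModEq] using this
  have hp2 : p ≠ 2 := by omega
  refine ⟨‹Fact p.Prime›, hp2, fun z hz => ?_⟩
  refine aux_legendre_one p hp2 z (hpos z hz) (hmod.of_dvd ?_)
  exact Nat.mul_dvd_mul_left 8 (Finset.dvd_prod_of_mem _ hz)
end

section
/- Let Π be a nonempty finite set of prime numbers and let ε : Π → {-1, 1} be any function. Then the set of odd primes p such that χ_p(q) = ε(q) for every q ∈ Π is infinite. -/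
/-- Basic Lemma: given a nonempty finite set `T` of primes and a choice of signs `ε` on `T`,
there are infinitely many (odd) primes `p` with `χ_p(q) = ε(q)` for all `q ∈ T`. -/
theorem infinite_setOf_legendreSym_pattern_on_primes (T : Finset ℕ) (hT : T.Nonempty)
    (hTprime : ∀ q ∈ T, q.Prime)
    (ε : ℕ → ℤ) (hε : ∀ q ∈ T, ε q = 1 ∨ ε q = -1) :
    {p : ℕ | ∃ hp : Fact p.Prime, p ≠ 2 ∧ ∀ q ∈ T, @legendreSym p hp (q : ℤ) = ε q}.Infinite := by
  classical
  -- choose a nonresidue mod each odd prime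
  have hnr : ∀ q : ℕ, ∃ b : ℕ, q.Prime → q ≠ 2 →
      ¬IsSquare ((b : ZMod q)) ∧ ((b : ZMod q)) ≠ 0 := by
    intro q
    by_cases hq : q.Prime ∧ q ≠ 2
    · obtain ⟨hq1, hq2⟩ := hq
      haveI : Fact q.Prime := ⟨hq1⟩
      obtain ⟨b, hb⟩ := FiniteField.exists_nonsquare (F := ZMod q)
        (by rw [ZMod.ringChar_zmod_n]; exact hq2)
      refine ⟨b.val, fun _ _ => ?_⟩
      rw [ZMod.natCast_val, ZMod.cast_id]
      refine ⟨hb, fun h0 => hb ?_⟩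
      rw [h0]; exact ⟨0, (mul_zero 0).symm⟩
    · exact ⟨0, fun h1 h2 => absurd ⟨h1, h2⟩ hq⟩
  choose nonres hnonres using hnr
  set s : ℕ → ℕ := fun i => if i = 2 then 8 else i with hs_def
  set a : ℕ → ℕ := fun i => if i = 2 then (if ε 2 = 1 then 1 else 5)
    else (if ε i = 1 then 1 else nonres i) with ha_def
  set t : Finset ℕ := insert 2 T with ht_def
  have htmem : ∀ i ∈ t, i = 2 ∨ (i.Prime ∧ i ≠ 2) := by
    intro i hi
    rcases Finset.mem_insert.mp hi with h | h
    · exact Or.inl h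
    · by_cases h2 : i = 2
      · exact Or.inl h2
      · exact Or.inr ⟨hTprime i h, h2⟩
  have hs : ∀ i ∈ t, s i ≠ 0 := by
    intro i hi
    rcases htmem i hi with h | ⟨hp, h2⟩
    · simp [hs_def, h]
    · simp only [hs_def, if_neg h2]; exact hp.ne_zero
  have pp : Set.Pairwise ↑t (Function.onFun Nat.Coprime s) := by
    intro i hi j hj hij
    simp only [Finset.coe_insert, Set.mem_insert_iff, Finset.mem_coe] at hi hj
    rcases htmem i hi with h1 | ⟨hip, hi2⟩
    · rcases htmem j hj with h2 | ⟨hjp, hj2⟩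
      · exact absurd (h1.trans h2.symm) hij
      · show Nat.Coprime (s i) (s j)
        simp only [hs_def, if_pos h1, if_neg hj2]
        have : Nat.Coprime 2 j := (Nat.coprime_primes Nat.prime_two hjp).mpr
          (fun h => hj2 h.symm)
        exact Nat.Coprime.pow_left 3 this
    · rcases htmem j hj with h2 | ⟨hjp, hj2⟩
      · show Nat.Coprime (s i) (s j)
        simp only [hs_def, if_neg hi2, if_pos h2]
        have : Nat.Coprime i 2 := (Nat.coprime_primes hip Nat.prime_two).mpr hi2
        exact Nat.Coprime.pow_right 3 this
      · show Nat.Coprime (s i) (s j)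
        simp only [hs_def, if_neg hi2, if_neg hj2]
        exact (Nat.coprime_primes hip hjp).mpr hij
  obtain ⟨k, hk⟩ := Nat.chineseRemainderOfFinset a s t hs pp
  set N : ℕ := ∏ i ∈ t, s i with hN_def
  haveI : NeZero N := ⟨Finset.prod_ne_zero_iff.mpr hs⟩
  -- a 2 is 1 or 5
  have ha2 : a 2 = 1 ∨ a 2 = 5 := by
    simp only [ha_def, if_pos rfl]
    by_cases h : ε 2 = 1 <;> simp [h]
  have h2t : 2 ∈ t := Finset.mem_insert_self 2 T
  have hk8 : k % 8 = a 2 := by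
    have := hk 2 h2t
    simp only [hs_def, if_pos rfl] at this
    have h8 : a 2 % 8 = a 2 := by rcases ha2 with h | h <;> simp [h]
    rw [Nat.ModEq] at this; rw [this, h8]
  -- for odd primes i ∈ t, (a i : ZMod i) ≠ 0
  have hane : ∀ i ∈ t, i ≠ 2 → ((a i : ZMod i)) ≠ 0 := by
    intro i hi hi2
    have hip : i.Prime := (htmem i hi).resolve_left hi2 |>.1
    haveI : Fact i.Prime := ⟨hip⟩
    simp only [ha_def, if_neg hi2]
    by_cases h : ε i = 1
    · simp only [if_pos h, Nat.cast_one]; exact one_ne_zero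
    · simp only [if_neg h]; exact (hnonres i hip hi2).2
  -- k is a unit mod N
  have hu : IsUnit ((k : ℕ) : ZMod N) := by
    rw [ZMod.isUnit_iff_coprime]
    apply Nat.Coprime.prod_right
    intro i hi
    rcases htmem i hi with h | ⟨hip, hi2⟩
    · subst h
      simp only [hs_def, if_pos rfl]
      rw [Nat.coprime_comm]
      show Nat.gcd 8 k = 1
      rw [Nat.gcd_rec, hk8]
      rcases ha2 with h | h <;> simp [h]
    · simp only [hs_def, if_neg hi2]
      rw [Nat.coprime_comm, Nat.Prime.coprime_iff_not_dvd hip]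
      intro hdvd
      apply hane i hi hi2
      have h1 : (k : ZMod i) = (a i : ZMod i) := by
        have := hk i hi
        simp only [hs_def, if_neg hi2] at this
        exact (ZMod.natCast_eq_natCast_iff _ _ _).mpr this
      rw [← h1, ZMod.natCast_eq_zero_iff]
      exact hdvd
  -- Dirichlet
  have hdir := Nat.infinite_setOfPred_prime_and_eq_mod (q := N) (a := ((k : ℕ) : ZMod N)) hu
  apply hdir.mono
  rintro p ⟨hp, hpk⟩
  haveI hfp : Fact p.Prime := ⟨hp⟩
  -- p ≡ a i mod s i for all i ∈ t
  have hmod : ∀ i ∈ t, p ≡ a i [MOD s i] := by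
    intro i hi
    have hpN : p ≡ k [MOD N] := (ZMod.natCast_eq_natCast_iff _ _ _).mp hpk
    exact (hpN.of_dvd (Finset.dvd_prod_of_mem s hi)).trans (hk i hi)
  have hp8 : p % 8 = a 2 := by
    have := hmod 2 h2t
    simp only [hs_def, if_pos rfl] at this
    have h8 : a 2 % 8 = a 2 := by rcases ha2 with h | h <;> simp [h]
    rw [Nat.ModEq] at this; rw [this, h8]
  have hp2 : p ≠ 2 := by
    intro h; rw [h] at hp8; rcases ha2 with h' | h' <;> omega
  have hp4 : p % 4 = 1 := by
    have : p % 8 % 4 = p % 4 := Nat.mod_mod_of_dvd p (by norm_num)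
    rcases ha2 with h' | h' <;> omega
  refine ⟨hfp, hp2, fun q hq => ?_⟩
  by_cases hq2 : q = 2
  · subst hq2
    have h22 : ((2 : ℕ) : ℤ) = 2 := by norm_num
    rw [h22, legendreSym.at_two hp2, ZMod.χ₈_nat_eq_if_mod_eight]
    have hpodd : p % 2 = 1 := by
      have : p % 8 % 2 = p % 2 := Nat.mod_mod_of_dvd p (by norm_num)
      rcases ha2 with h' | h' <;> omega
    rcases hε 2 hq with he | he
    · have ha2' : a 2 = 1 := by simp [ha_def, he]
      rw [if_neg (by omega), if_pos (by omega)]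
      exact he.symm
    · have ha2' : a 2 = 5 := by simp [ha_def, he]
      rw [if_neg (by omega), if_neg (by omega)]
      exact he.symm
  · have hqp : q.Prime := hTprime q hq
    haveI : Fact q.Prime := ⟨hqp⟩
    rw [← legendreSym.quadratic_reciprocity_one_mod_four hp4 hq2]
    have hqt : q ∈ t := Finset.mem_insert_of_mem hq
    have hpq : ((p : ℤ) : ZMod q) = ((a q : ℕ) : ZMod q) := by
      push_cast
      apply (ZMod.natCast_eq_natCast_iff _ _ _).mpr
      have := hmod q hqt
      simpa only [hs_def, if_neg hq2] using this
    rcases hε q hq with he | he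
    · have haq : a q = 1 := by simp [ha_def, hq2, he]
      rw [he]
      rw [legendreSym.eq_one_iff]
      · rw [hpq, haq, Nat.cast_one]; exact IsSquare.one
      · rw [hpq, haq, Nat.cast_one]; exact one_ne_zero
    · have haq : a q = nonres q := by simp [ha_def, hq2, he]
      rw [he]
      rw [legendreSym.eq_neg_one_iff]
      rw [hpq, haq]
      exact (hnonres q hqp hq2).1
end

section
/- Let S be a nonempty finite set of positive integers. The set of odd primes p such that χ_p(z) = -1 for every z ∈ S is infinite if and only if for every subset T of S of odd cardinality, the product ∏_{z ∈ T} z is not a perfect square. -/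
lemma natCast_zmod_two_eq_one_iff (n : ℕ) : (n : ZMod 2) = 1 ↔ Odd n := by
  rw [Nat.odd_iff, show ((n : ZMod 2)) = ((n % 2 : ℕ) : ZMod 2) from (ZMod.natCast_mod n 2).symm]
  have h : n % 2 = 0 ∨ n % 2 = 1 := by omega
  rcases h with h | h <;> rw [h] <;> simp

lemma natCast_zmod_two_eq_zero_iff (n : ℕ) : (n : ZMod 2) = 0 ↔ Even n := by
  rw [Nat.even_iff, show ((n : ZMod 2)) = ((n % 2 : ℕ) : ZMod 2) from (ZMod.natCast_mod n 2).symm]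
  have h : n % 2 = 0 ∨ n % 2 = 1 := by omega
  rcases h with h | h <;> rw [h] <;> simp

lemma isSquare_of_even_factorization {n : ℕ} (hn : n ≠ 0)
    (h : ∀ q, Even (n.factorization q)) : IsSquare n := by
  refine ⟨n.factorization.prod fun q k => q ^ (k / 2), ?_⟩
  conv_lhs => rw [← Nat.factorization_prod_pow_eq_self hn]
  rw [Finsupp.prod, Finsupp.prod, ← Finset.prod_mul_distrib]
  refine Finset.prod_congr rfl fun q hq => ?_
  rw [← pow_add]
  congr 1
  have := (h q).two_dvd
  omega

lemma exists_functional (S : Finset ℕ) (hpos : ∀ z ∈ S, 0 < z)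
    (hC : ∀ T ⊆ S, Odd T.card → ¬ IsSquare (∏ z ∈ T, z)) :
    ∃ e : ℕ → ZMod 2, ∀ z ∈ S,
      ∑ q ∈ z.primeFactors, (z.factorization q : ZMod 2) * e q = 1 := by
  classical
  set v : ℕ → (ℕ → ZMod 2) := fun z q => (z.factorization q : ZMod 2) with hv
  set w : ℕ → (ZMod 2) × (ℕ → ZMod 2) := fun z => (1, v z) with hw
  set sp : Submodule (ZMod 2) ((ZMod 2) × (ℕ → ZMod 2)) :=
    Submodule.span (ZMod 2) (w '' ↑S) with hsp
  have hx : ((1 : ZMod 2), (0 : ℕ → ZMod 2)) ∉ sp := by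
    intro hmem
    rw [hsp, Finsupp.mem_span_image_iff_linearCombination] at hmem
    obtain ⟨l, hl, hlc⟩ := hmem
    set T : Finset ℕ := l.support with hT
    have hTS : T ⊆ S := fun t ht => hl ht
    have hsum : ((1 : ZMod 2), (0 : ℕ → ZMod 2)) = ∑ z ∈ T, w z := by
      rw [← hlc, Finsupp.linearCombination_apply, Finsupp.sum]
      refine Finset.sum_congr rfl fun z hz => ?_
      have h1 : l z = 1 := by
        have h0 : l z ≠ 0 := Finsupp.mem_support_iff.mp hz
        revert h0; generalize l z = x; revert x; decide
      rw [h1, one_smul]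
    have hcard : Odd T.card := by
      rw [← natCast_zmod_two_eq_one_iff]
      have h2 := congrArg Prod.fst hsum
      rw [Prod.fst_sum] at h2
      simpa [hw] using h2.symm
    have hvsum : ∀ q : ℕ, ∑ z ∈ T, v z q = 0 := by
      intro q
      have h2 := congrArg Prod.snd hsum
      rw [Prod.snd_sum] at h2
      have h3 := congrFun h2.symm q
      simpa [Finset.sum_apply, hw] using h3
    refine hC T hTS hcard (isSquare_of_even_factorization ?_ fun q => ?_)
    · exact Finset.prod_ne_zero_iff.mpr fun z hz => (hpos z (hTS hz)).ne'
    · rw [← natCast_zmod_two_eq_zero_iff]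
      have hfac : (∏ z ∈ T, z).factorization q = ∑ z ∈ T, z.factorization q := by
        rw [Nat.factorization_prod fun z hz => (hpos z (hTS hz)).ne']
        simp [Finsupp.finset_sum_apply]
      rw [hfac, Nat.cast_sum]
      exact hvsum q
  obtain ⟨f, hf1, hf2⟩ := sp.exists_dual_map_eq_bot_of_notMem hx inferInstance
  have hf1' : f (1, 0) = 1 := by
    have h2 : ∀ x : ZMod 2, x ≠ 0 → x = 1 := by decide
    exact h2 _ hf1
  have hfz : ∀ z ∈ S, f (0, v z) = 1 := by
    intro z hz
    have hmem : w z ∈ sp := Submodule.subset_span ⟨z, hz, rfl⟩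
    have h0 : f (w z) = 0 := by
      have := hf2 ▸ Submodule.mem_map_of_mem (f := f) hmem
      exact (Submodule.mem_bot (ZMod 2)).mp this
    have hsum : w z = (1, 0) + (0, v z) := by
      show ((1 : ZMod 2), v z) = _
      rw [Prod.mk_add_mk, add_zero, zero_add]
    rw [hsum, map_add, hf1'] at h0
    have h2 : ∀ x : ZMod 2, 1 + x = 0 → x = 1 := by decide
    exact h2 _ h0
  refine ⟨fun q => f (0, Pi.single q 1), fun z hz => ?_⟩
  have hrepr : (((0 : ZMod 2), v z) : ZMod 2 × (ℕ → ZMod 2)) = ∑ q ∈ z.primeFactors,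
      (z.factorization q : ZMod 2) •
        (((0 : ZMod 2), Pi.single q (1 : ZMod 2)) : ZMod 2 × (ℕ → ZMod 2)) := by
    rw [Prod.ext_iff]
    constructor
    · rw [Prod.fst_sum]; simp
    · rw [Prod.snd_sum]
      funext q'
      rw [Finset.sum_apply]
      simp only [Prod.smul_mk, Pi.smul_apply, Pi.single_apply, smul_eq_mul, mul_ite, mul_one,
        mul_zero]
      rw [Finset.sum_ite_eq z.primeFactors q' (fun q => (z.factorization q : ZMod 2))]
      by_cases hq' : q' ∈ z.primeFactors
      · rw [if_pos hq']
      · rw [if_neg hq']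
        have h0 : z.factorization q' = 0 := by
          rw [← Finsupp.notMem_support_iff, Nat.support_factorization]
          exact hq'
        simp [hv, h0]
  calc ∑ q ∈ z.primeFactors, (z.factorization q : ZMod 2) * f (0, Pi.single q 1)
      = ∑ q ∈ z.primeFactors, f ((z.factorization q : ZMod 2) •
          (((0 : ZMod 2), Pi.single q (1 : ZMod 2)) : ZMod 2 × (ℕ → ZMod 2))) := by
        refine Finset.sum_congr rfl fun q hq => ?_
        rw [map_smul, smul_eq_mul]
    _ = f (0, v z) := by rw [← map_sum, ← hrepr]
    _ = 1 := hfz z hz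

/-- A nonempty finite set `S` of positive integers is a set of quadratic non-residues of
infinitely many primes if and only if for every subset `T ⊆ S` of odd cardinality the product
of the elements of `T` is not a perfect square. -/
theorem infinite_setOf_forall_legendreSym_eq_neg_one_iff (S : Finset ℕ) (hS : S.Nonempty)
    (hpos : ∀ z ∈ S, 0 < z) :
    {p : ℕ | ∃ hp : Fact p.Prime, p ≠ 2 ∧ ∀ z ∈ S, @legendreSym p hp (z : ℤ) = -1}.Infinite ↔
      ∀ T ⊆ S, Odd T.card → ¬ IsSquare (∏ z ∈ T, z) := by
  constructor
  · intro hinf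
    intro T hT hTodd hsq
    obtain ⟨k, hk⟩ := hsq
    have hprod_pos : 0 < ∏ z ∈ T, z :=
      Finset.prod_pos fun z hz => hpos z (hT hz)
    obtain ⟨p, hpmem, hpgt⟩ := Set.infinite_iff_exists_gt.mp hinf (∏ z ∈ T, z)
    obtain ⟨hpF, hp2, hleg⟩ := hpmem
    haveI := hpF
    have hk0 : k ≠ 0 := by rintro rfl; simp [hk] at hprod_pos
    have hkp : ¬ (p : ℕ) ∣ k := by
      intro hdvd
      have h1 : p ≤ k := Nat.le_of_dvd (Nat.pos_of_ne_zero hk0) hdvd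
      have h2 : k ≤ k * k := Nat.le_mul_of_pos_left k (Nat.pos_of_ne_zero hk0)
      omega
    have hkz : ((k : ℤ) : ZMod p) ≠ 0 := by
      push_cast
      rw [Ne, ZMod.natCast_eq_zero_iff]
      exact hkp
    have h1 : ∏ z ∈ T, legendreSym p (z : ℤ) = legendreSym p ((∏ z ∈ T, z : ℕ) : ℤ) := by
      have := map_prod (legendreSym.hom p) (fun z : ℕ => (z : ℤ)) T
      simp only [legendreSym.hom, MonoidWithZeroHom.coe_mk, ZeroHom.coe_mk] at this
      rw [← this, Nat.cast_prod]
    rw [Finset.prod_congr rfl fun z hz => hleg z (hT hz), Finset.prod_const, hk] at h1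
    rw [show ((k * k : ℕ) : ℤ) = (k : ℤ) ^ 2 by push_cast; ring] at h1
    rw [legendreSym.sq_one' (p := p) hkz, hTodd.neg_one_pow] at h1
    exact absurd h1 (by norm_num)
  · intro hC
    classical
    obtain ⟨e, he⟩ := exists_functional S hpos hC
    set N := ∏ z ∈ S, z with hN
    have hN0 : N ≠ 0 := Finset.prod_ne_zero_iff.mpr fun z hz => (hpos z hz).ne'
    set P' : Finset ℕ := N.primeFactors.erase 2 with hP'
    have hP'prime : ∀ q ∈ P', q.Prime := fun q hq =>
      Nat.prime_of_mem_primeFactors (Finset.mem_of_mem_erase hq)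
    have hP'ne2 : ∀ q ∈ P', q ≠ 2 := fun q hq => Finset.ne_of_mem_erase hq
    -- nonsquare choice
    have hns : ∀ q : ℕ, q.Prime → q ≠ 2 → ∃ b : ZMod q, ¬ IsSquare b := by
      intro q hq hq2
      haveI : Fact q.Prime := ⟨hq⟩
      exact FiniteField.exists_nonsquare (by rw [ZMod.ringChar_zmod_n]; exact hq2)
    let bb : (q : {q : ℕ // q ∈ P'}) → ZMod q :=
      fun q => Classical.choose (hns q (hP'prime q q.2) (hP'ne2 q q.2))
    have hbb : ∀ q : {q : ℕ // q ∈ P'}, ¬ IsSquare (bb q) :=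
      fun q => Classical.choose_spec (hns q (hP'prime q q.2) (hP'ne2 q q.2))
    -- CRT setup
    let m : Option {q : ℕ // q ∈ P'} → ℕ := fun i => i.elim 8 (fun q => (q : ℕ))
    have hm : Pairwise (Function.onFun Nat.Coprime m) := by
      intro i j hij
      have co8 : ∀ q : {q : ℕ // q ∈ P'}, Nat.Coprime 8 q := by
        intro q
        have h2q : Nat.Coprime 2 q :=
          (Nat.coprime_primes Nat.prime_two (hP'prime q q.2)).mpr
            (fun h => hP'ne2 q q.2 h.symm)
        rw [show (8 : ℕ) = 2 ^ 3 by norm_num]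
        exact Nat.Coprime.pow_left 3 h2q
      match i, j with
      | none, none => exact absurd rfl hij
      | none, some q => exact co8 q
      | some q, none => exact (co8 q).symm
      | some q, some q' =>
        refine (Nat.coprime_primes (hP'prime q q.2) (hP'prime q' q'.2)).mpr ?_
        intro h
        exact hij (by rw [Subtype.ext h])
    let E := ZMod.prodEquivPi m hm
    let r8 : ℕ := if e 2 = 1 then 5 else 1
    let a : ∀ i, ZMod (m i) := fun i =>
      match i with
      | none => ((r8 : ℕ) : ZMod 8)
      | some q => if e q = 1 then bb q else 1
    have haU' : ∀ i, IsUnit (a i) := by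
      intro i
      match i with
      | none =>
        show IsUnit ((r8 : ℕ) : ZMod 8)
        by_cases h : e 2 = 1 <;> simp only [r8, if_pos, if_neg, h] <;> decide
      | some q =>
        haveI : Fact (q : ℕ).Prime := ⟨hP'prime q q.2⟩
        show IsUnit (if e q = 1 then bb q else 1)
        split
        · rw [isUnit_iff_ne_zero]
          intro h0
          exact hbb q (h0 ▸ IsSquare.zero)
        · exact isUnit_one
    have haU : IsUnit a := by
      choose u hu using haU'
      refine ⟨⟨a, fun i => ↑(u i)⁻¹, funext fun i => ?_, funext fun i => ?_⟩, rfl⟩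
      · show a i * ↑(u i)⁻¹ = 1
        rw [← hu i, Units.mul_inv]
      · show ↑(u i)⁻¹ * a i = 1
        rw [← hu i, Units.inv_mul]
    haveI : NeZero (∏ i, m i) := by
      refine ⟨Finset.prod_ne_zero_iff.mpr fun i _ => ?_⟩
      cases i with
      | none => show (8 : ℕ) ≠ 0; norm_num
      | some q => exact (hP'prime q q.2).ne_zero
    have hinf := Nat.infinite_setOfPred_prime_and_eq_mod (a := E.symm a) ((haU).map E.symm)
    refine Set.Infinite.mono ?_ (hinf.diff (Set.finite_le_nat N))
    rintro p ⟨⟨hp, hpa⟩, hpN⟩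
    simp only [Set.mem_setOf_eq, not_le] at hpN
    haveI hpF : Fact p.Prime := ⟨hp⟩
    have hcomp : ∀ i, (p : ZMod (m i)) = a i := by
      intro i
      have h1 : E (p : ZMod (∏ i, m i)) = a := by rw [hpa, RingEquiv.apply_symm_apply]
      rw [map_natCast E p] at h1
      have h2 := congrFun h1 i
      simpa using h2
    have h8 : (p : ZMod 8) = ((r8 : ℕ) : ZMod 8) := hcomp none
    have hr8 : r8 = 1 ∨ r8 = 5 := by
      by_cases h : e 2 = 1 <;> simp [r8, h]
    have hp8 : p % 8 = r8 := by
      have h := (ZMod.natCast_eq_natCast_iff p r8 8).mp h8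
      rw [Nat.ModEq] at h
      omega
    have hp2 : p ≠ 2 := by omega
    have hp4 : p % 4 = 1 := by omega
    have key : ∀ q ∈ N.primeFactors, legendreSym p (q : ℤ) = (-1 : ℤ) ^ (e q).val := by
      intro q hqP
      by_cases hq2 : q = 2
      · subst hq2
        rw [show ((2 : ℕ) : ℤ) = 2 by norm_num, legendreSym.at_two hp2, h8]
        by_cases h : e 2 = 1
        · rw [show r8 = 5 by simp [r8, h], h]
          decide
        · have he0 : e 2 = 0 := by revert h; generalize e 2 = x; revert x; decide
          rw [show r8 = 1 by simp [r8, h], he0]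
          decide
      · have hqP' : q ∈ P' := Finset.mem_erase.mpr ⟨hq2, hqP⟩
        haveI : Fact q.Prime := ⟨hP'prime q hqP'⟩
        have hq := hcomp (some ⟨q, hqP'⟩)
        simp only [a] at hq
        replace hq : (p : ZMod q) = if e q = 1 then bb ⟨q, hqP'⟩ else 1 := hq
        rw [← legendreSym.quadratic_reciprocity_one_mod_four hp4 hq2]
        by_cases h : e q = 1
        · rw [if_pos h] at hq
          rw [h, show ((-1 : ℤ)) ^ (1 : ZMod 2).val = -1 by decide]
          refine (legendreSym.eq_neg_one_iff' (p := q)).mpr ?_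
          rw [hq]
          exact hbb ⟨q, hqP'⟩
        · have he0 : e q = 0 := by revert h; generalize e q = x; revert x; decide
          rw [if_neg h] at hq
          rw [he0, show ((-1 : ℤ)) ^ (0 : ZMod 2).val = 1 by decide]
          refine (legendreSym.eq_one_iff' (p := q) ?_).mpr ?_
          · rw [hq]; exact one_ne_zero
          · rw [hq]; exact IsSquare.one
    refine ⟨hpF, hp2, fun z hz => ?_⟩
    have hz0 : z ≠ 0 := (hpos z hz).ne'
    have hzN : z.primeFactors ⊆ N.primeFactors :=
      Nat.primeFactors_mono (Finset.dvd_prod_of_mem _ hz) hN0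
    have hzfac : (z : ℤ) = ∏ q ∈ z.primeFactors, (q : ℤ) ^ z.factorization q := by
      conv_lhs => rw [← Nat.factorization_prod_pow_eq_self hz0]
      rw [Finsupp.prod, Nat.support_factorization]
      push_cast
      rfl
    rw [hzfac]
    have hmap := map_prod (legendreSym.hom p)
      (fun q : ℕ => (q : ℤ) ^ z.factorization q) z.primeFactors
    simp only [legendreSym.hom, MonoidWithZeroHom.coe_mk, ZeroHom.coe_mk] at hmap
    rw [hmap]
    have hstep : ∀ q ∈ z.primeFactors,
        legendreSym p ((q : ℤ) ^ z.factorization q)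
          = (-1 : ℤ) ^ ((e q).val * z.factorization q) := by
      intro q hq
      have hpow := map_pow (legendreSym.hom p) (q : ℤ) (z.factorization q)
      simp only [legendreSym.hom, MonoidWithZeroHom.coe_mk, ZeroHom.coe_mk] at hpow
      rw [hpow, key q (hzN hq), ← pow_mul]
    rw [Finset.prod_congr rfl hstep, Finset.prod_pow_eq_pow_sum]
    have hodd : Odd (∑ q ∈ z.primeFactors, (e q).val * z.factorization q) := by
      rw [← natCast_zmod_two_eq_one_iff, Nat.cast_sum]
      rw [← he z hz]
      refine Finset.sum_congr rfl fun q hq => ?_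
      rw [Nat.cast_mul]
      have hv : (((e q).val : ℕ) : ZMod 2) = e q := by
        have h2 : ∀ x : ZMod 2, ((x.val : ℕ) : ZMod 2) = x := by decide
        exact h2 _
      rw [hv, mul_comm]
    exact hodd.neg_one_pow
end

section
/- Let S be a nonempty finite set of positive integers. The following are equivalent: (i) for every nonempty subset T of S, the product ∏_{z ∈ T} z is not a perfect square; (ii) for every function ε : S → {-1, 1}, the set of odd primes p such that χ_p(z) = ε(z) for every z ∈ S is infinite. -/
open Finset

/-- parity indicator of a sign -/
private def ind2 (x : ℤ) : ZMod 2 := if x = 1 then 0 else 1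

private lemma ind2_mul {a b : ℤ} (ha : a = 1 ∨ a = -1) (hb : b = 1 ∨ b = -1) :
    ind2 (a * b) = ind2 a + ind2 b := by
  rcases ha with h | h <;> rcases hb with h' | h' <;> rw [h, h'] <;> norm_num [ind2] <;> decide

private lemma eq_of_ind2_eq {a b : ℤ} (ha : a = 1 ∨ a = -1) (hb : b = 1 ∨ b = -1)
    (h : ind2 a = ind2 b) : a = b := by
  rcases ha with h1 | h1 <;> rcases hb with h2 | h2 <;> rw [h1, h2] at h ⊢ <;>
    first | rfl | (exfalso; norm_num [ind2] at h)

private lemma ind2_prod {ι : Type*} (s : Finset ι) (g : ι → ℤ)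
    (hg : ∀ i ∈ s, g i = 1 ∨ g i = -1) :
    ((∏ i ∈ s, g i = 1) ∨ (∏ i ∈ s, g i = -1)) ∧
      ind2 (∏ i ∈ s, g i) = ∑ i ∈ s, ind2 (g i) := by
  classical
  induction s using Finset.induction with
  | empty => simp [ind2]
  | insert _ _ hns ih =>
    rename_i a s
    have hga := hg a (mem_insert_self a s)
    obtain ⟨h1, h2⟩ := ih (fun i hi => hg i (mem_insert_of_mem hi))
    rw [prod_insert hns, sum_insert hns, ← h2]
    refine ⟨?_, ind2_mul hga h1⟩
    rcases hga with h | h <;> rcases h1 with h' | h' <;> rw [h, h'] <;> norm_num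

private lemma coprime_congr {a a' n : ℕ} (h : a % n = a' % n) :
    Nat.gcd a n = Nat.gcd a' n := by
  rw [Nat.gcd_comm a n, Nat.gcd_comm a' n, Nat.gcd_rec n a, Nat.gcd_rec n a', h]

private lemma jac_congr {z : ℕ} {N b b' : ℕ} (hz : 4 * z ∣ N) (hb : Odd b) (hb' : Odd b')
    (h : b % N = b' % N) : jacobiSym (z : ℤ) b = jacobiSym (z : ℤ) b' := by
  rw [jacobiSym.mod_right (z : ℤ) hb, jacobiSym.mod_right (z : ℤ) hb']
  have hzz : ((z : ℤ)).natAbs = z := Int.natAbs_natCast z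
  rw [hzz, ← Nat.mod_mod_of_dvd b hz, ← Nat.mod_mod_of_dvd b' hz, h]

private lemma legendre_prod (p : ℕ) [Fact p.Prime] (T : Finset ℕ) :
    legendreSym p (∏ z ∈ T, (z : ℤ)) = ∏ z ∈ T, legendreSym p (z : ℤ) := by
  classical
  induction T using Finset.induction with
  | empty => simp
  | insert _ _ hns ih =>
    rename_i a s
    rw [prod_insert hns, prod_insert hns, legendreSym.mul, ih]

private lemma jacobi_prod (b : ℕ) (T : Finset ℕ) :
    jacobiSym (∏ z ∈ T, (z : ℤ)) b = ∏ z ∈ T, jacobiSym (z : ℤ) b := by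
  classical
  induction T using Finset.induction with
  | empty => simp
  | insert _ _ hns ih =>
    rename_i a s
    rw [prod_insert hns, prod_insert hns, jacobiSym.mul_left, ih]

/-- If `m ∣ N`, `4 ∣ N`, and `m` is positive but not a square, then there is an odd `b`
coprime to `N` with `J(m | b) = -1`. -/
private lemma exists_jacobi_neg_one {N m : ℕ} (hN0 : N ≠ 0) (hN4 : 4 ∣ N) (hmN : m ∣ N)
    (hm0 : 0 < m) (hns : ¬ IsSquare m) :
    ∃ b : ℕ, Odd b ∧ Nat.Coprime b N ∧ jacobiSym (m : ℤ) b = -1 := by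
  obtain ⟨m₀, k, hm₀0, hk0, hmk, hsf⟩ := Nat.sq_mul_squarefree_of_pos hm0
  -- hmk : k ^ 2 * m₀ = m
  have hm₀1 : m₀ ≠ 1 := by
    rintro rfl
    exact hns ⟨k, by rw [← hmk]; ring⟩
  have hm₀dvd : m₀ ∣ N := dvd_trans (Dvd.intro_left _ hmk) hmN
  have hkdvd : k ∣ N := dvd_trans (dvd_trans (dvd_pow_self k two_ne_zero) (Dvd.intro _ hmk)) hmN
  -- key step: find odd b coprime to N with J(m₀ | b) = -1
  suffices h : ∃ b : ℕ, Odd b ∧ Nat.Coprime b N ∧ jacobiSym (m₀ : ℤ) b = -1 by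
    obtain ⟨b, hb, hbN, hJ⟩ := h
    refine ⟨b, hb, hbN, ?_⟩
    have : ((m : ℕ) : ℤ) = (k : ℤ) ^ 2 * (m₀ : ℤ) := by push_cast [← hmk]; ring
    rw [this, jacobiSym.mul_left, jacobiSym.sq_one', hJ, one_mul]
    · -- gcd (k : ℤ) b = 1
      have : Nat.Coprime k b := (Nat.Coprime.coprime_dvd_right hkdvd hbN).symm
      simpa [Int.gcd_natCast_natCast] using this
  clear hns hmk hmN hm0 hkdvd hk0 k
  by_cases h2 : 2 ∣ m₀
  · -- even squarefree part: use b ≡ 5 mod 8, b ≡ 1 mod odd part of N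
    obtain ⟨m₁, rfl⟩ := h2
    have hm₁odd : ¬ 2 ∣ m₁ := by
      intro hd
      exact absurd (hsf 2 (mul_dvd_mul_left 2 hd)) (by simp [Nat.isUnit_iff])
    have hm₁0 : m₁ ≠ 0 := by rintro rfl; simp at hm₀0
    set B := ordCompl[2] N with hB
    have hBdvd : 2 ^ N.factorization 2 * B = N := Nat.ordProj_mul_ordCompl_eq_self N 2
    have hB2 : ¬ 2 ∣ B := Nat.not_dvd_ordCompl Nat.prime_two hN0
    have hco8B : Nat.Coprime 8 B := by
      have : Nat.Coprime 2 B := (Nat.coprime_two_left (n := B)).mpr (Nat.odd_iff.mpr (by omega))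
      simpa using Nat.Coprime.pow_left 3 this
    obtain ⟨b, hbq, hbB⟩ := Nat.chineseRemainder hco8B 5 1
    have hb8 : b % 8 = 5 := by simpa [Nat.ModEq] using hbq
    have hbodd : Odd b := Nat.odd_iff.mpr (by omega)
    have hb4 : b % 4 = 1 := by omega
    have hbB1 : b % B = 1 % B := hbB
    have hcobB : Nat.Coprime b B := by
      have := coprime_congr hbB1
      simpa [Nat.Coprime, this] using Nat.coprime_one_left B
    have hcobN : Nat.Coprime b N := by
      rw [← hBdvd]
      exact Nat.Coprime.mul_right (Nat.Coprime.pow_right _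
        ((Nat.coprime_two_right (n := b)).mpr hbodd)) hcobB
    refine ⟨b, hbodd, hcobN, ?_⟩
    have hm₁dvdB : m₁ ∣ B := by
      have hm₁N : m₁ ∣ N := dvd_trans (Dvd.intro_left 2 rfl) hm₀dvd
      rw [← hBdvd] at hm₁N
      exact (Nat.Coprime.dvd_of_dvd_mul_left
        (Nat.Coprime.pow_right _ ((Nat.coprime_two_right (n := m₁)).mpr
          (Nat.odd_iff.mpr (by omega)))) hm₁N)
    have h2b : jacobiSym (2 : ℤ) b = -1 := by
      rw [jacobiSym.at_two hbodd, ZMod.χ₈_nat_mod_eight, hb8]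
      decide
    have hm₁b : jacobiSym ((2 * m₁ : ℕ) : ℤ) b = jacobiSym (2 : ℤ) b * jacobiSym (m₁ : ℤ) b := by
      push_cast
      rw [jacobiSym.mul_left]
    rw [hm₁b, h2b]
    have : jacobiSym (m₁ : ℤ) b = jacobiSym (b : ℤ) m₁ :=
      jacobiSym.quadratic_reciprocity_one_mod_four' (Nat.odd_iff.mpr (by omega)) hb4
    rw [this]
    have hbm₁ : (b : ℤ) % m₁ = 1 % m₁ := by
      have : b % m₁ = 1 % m₁ := (hbB.of_dvd hm₁dvdB)
      exact_mod_cast congrArg (Nat.cast : ℕ → ℤ) this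
    rw [jacobiSym.mod_left' hbm₁, jacobiSym.one_left, mul_one]
  · -- odd squarefree part: pick an odd prime q ∣ m₀, b ≡ nonresidue mod q
    have hq : m₀.minFac.Prime := Nat.minFac_prime hm₀1
    set q := m₀.minFac with hqdef
    have hqdvd : q ∣ m₀ := Nat.minFac_dvd m₀
    have hq2 : q ≠ 2 := by rintro h; rw [h] at hqdvd; exact h2 hqdvd
    have hqodd : Odd q := hq.odd_of_ne_two hq2
    obtain ⟨m₁, hm₁⟩ := hqdvd
    have hqm₁ : ¬ q ∣ m₁ := by
      intro hd
      exact absurd (hsf q (by rw [hm₁]; exact mul_dvd_mul_left q hd))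
        (by simp [Nat.isUnit_iff, hq.ne_one])
    have hm₁0 : m₁ ≠ 0 := by rintro rfl; simp [hm₁] at hm₀0
    have hm₁odd : Odd m₁ := by
      rcases Nat.even_or_odd m₁ with he | ho
      · exfalso; exact h2 (by rw [hm₁]; exact Dvd.dvd.mul_left he.two_dvd q)
      · exact ho
    set B := ordCompl[q] N with hB
    have hBdvd : q ^ N.factorization q * B = N := Nat.ordProj_mul_ordCompl_eq_self N q
    have hBq : ¬ q ∣ B := Nat.not_dvd_ordCompl hq hN0
    have hcoqB : Nat.Coprime q B := (Nat.Prime.coprime_iff_not_dvd hq).mpr hBq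
    -- a quadratic nonresidue mod q
    haveI : Fact q.Prime := ⟨hq⟩
    obtain ⟨a, ha⟩ := FiniteField.exists_nonsquare (F := ZMod q)
      (by rw [ZMod.ringChar_zmod_n]; exact hq2)
    have ha0 : a ≠ 0 := by rintro rfl; exact ha ⟨0, by simp⟩
    set c := a.val with hc
    have hcq : (c : ZMod q) = a := ZMod.natCast_zmod_val a
    obtain ⟨b, hbq, hbB⟩ := Nat.chineseRemainder hcoqB c 1
    have hbB1 : b % B = 1 % B := hbB
    have h4B : 4 ∣ B := by
      have h4N : 4 ∣ N := hN4
      rw [← hBdvd] at h4N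
      refine Nat.Coprime.dvd_of_dvd_mul_left ?_ h4N
      have : Nat.Coprime 2 q := (Nat.coprime_two_left (n := q)).mpr hqodd
      simpa using (Nat.Coprime.pow_left 2 this).pow_right (N.factorization q)
    have hBpos : 4 ≤ B := Nat.le_of_dvd (Nat.ordCompl_pos q hN0) h4B
    have hb4 : b % 4 = 1 := by
      have := hbB.of_dvd h4B
      simpa [Nat.ModEq, Nat.mod_mod_of_dvd, Nat.one_mod_eq_one.mpr (by omega : (4:ℕ) ≠ 1)]
        using this
    have hbodd : Odd b := Nat.odd_iff.mpr (by omega)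
    have hcobB : Nat.Coprime b B := by
      have := coprime_congr hbB1
      simpa [Nat.Coprime, this] using Nat.coprime_one_left B
    have hcobq : Nat.Coprime b q := by
      have hbc : b % q = c % q := hbq
      have hccoq : Nat.Coprime c q := by
        rw [Nat.coprime_comm, Nat.Prime.coprime_iff_not_dvd hq]
        intro hd
        exact ha0 (by rw [← hcq]; exact (ZMod.natCast_eq_zero_iff c q).mpr hd)
      have := coprime_congr hbc
      simpa [Nat.Coprime, this] using hccoq
    have hcobN : Nat.Coprime b N := by
      rw [← hBdvd]
      exact Nat.Coprime.mul_right (hcobq.pow_right _) hcobB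
    refine ⟨b, hbodd, hcobN, ?_⟩
    have hm₀odd : Odd m₀ := hm₁ ▸ hqodd.mul hm₁odd
    rw [jacobiSym.quadratic_reciprocity_one_mod_four' hm₀odd hb4, hm₁]
    have : jacobiSym (b : ℤ) (q * m₁) = jacobiSym (b : ℤ) q * jacobiSym (b : ℤ) m₁ :=
      jacobiSym.mul_right' (b : ℤ) hq.ne_zero hm₁0
    rw [this]
    have hm₁B : m₁ ∣ B := by
      have hm₁N : m₁ ∣ N := dvd_trans ⟨q, by rw [hm₁]; ring⟩ hm₀dvd
      rw [← hBdvd] at hm₁N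
      exact Nat.Coprime.dvd_of_dvd_mul_left
        (((Nat.Prime.coprime_iff_not_dvd hq).mpr hqm₁).symm.pow_right _) hm₁N
    have hJq : jacobiSym (b : ℤ) q = -1 := by
      rw [← jacobiSym.legendreSym.to_jacobiSym, legendreSym.eq_neg_one_iff]
      have : ((b : ℤ) : ZMod q) = a := by
        have hbc : b % q = c % q := hbq
        have : ((b : ℕ) : ZMod q) = ((c : ℕ) : ZMod q) := by
          rw [ZMod.natCast_eq_natCast_iff]; exact hbc
        rw [Int.cast_natCast, this, hcq]
      rwa [this]
    have hJm₁ : jacobiSym (b : ℤ) m₁ = 1 := by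
      have hbm₁ : (b : ℤ) % m₁ = 1 % m₁ := by
        have : b % m₁ = 1 % m₁ := (hbB.of_dvd hm₁B)
        exact_mod_cast congrArg (Nat.cast : ℕ → ℤ) this
      rw [jacobiSym.mod_left' hbm₁, jacobiSym.one_left]
    rw [hJq, hJm₁, mul_one]


/-- A nonempty finite set `S` of positive integers supports all patterns (for every choice of
signs `ε` on `S` there are infinitely many odd primes `p` with `χ_p ≡ ε` on `S`) if and only if
the product of the elements of every nonempty subset of `S` is not a perfect square. -/
theorem supports_all_patterns_iff (S : Finset ℕ) (hS : S.Nonempty)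
    (hpos : ∀ z ∈ S, 0 < z) :
    (∀ T ⊆ S, T.Nonempty → ¬ IsSquare (∏ z ∈ T, z)) ↔
      ∀ ε : ℕ → ℤ, (∀ z ∈ S, ε z = 1 ∨ ε z = -1) →
        {p : ℕ | ∃ hp : Fact p.Prime, p ≠ 2 ∧
          ∀ z ∈ S, @legendreSym p hp (z : ℤ) = ε z}.Infinite := by
  classical
  constructor
  · -- forward direction
    intro hsq ε hε
    set P := ∏ z ∈ S, z with hP
    have hPpos : 0 < P := Finset.prod_pos hpos
    set N := 4 * P with hN
    have hN0 : N ≠ 0 := by positivity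
    haveI : NeZero N := ⟨hN0⟩
    haveI : Fact (1 < N) := ⟨by omega⟩
    have hN4 : 4 ∣ N := ⟨P, rfl⟩
    have h2N : 2 ∣ N := dvd_trans ⟨2, rfl⟩ hN4
    have hzP : ∀ z ∈ S, z ∣ P := fun z hz => Finset.dvd_prod_of_mem _ hz
    have hzN : ∀ z ∈ S, 4 * z ∣ N := fun z hz => mul_dvd_mul_left 4 (hzP z hz)
    -- values of units mod N are odd
    have hval_odd : ∀ u : (ZMod N)ˣ, Odd ((u : ZMod N)).val := by
      intro u
      have hco : Nat.gcd ((u : ZMod N)).val N = 1 := ZMod.val_coe_unit_coprime u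
      rw [Nat.odd_iff]
      by_contra h
      have h2 : 2 ∣ ((u : ZMod N)).val := by omega
      have := Nat.dvd_gcd h2 h2N
      omega
    have hval_ne : ∀ u : (ZMod N)ˣ, ((u : ZMod N)).val ≠ 0 := by
      intro u
      have := hval_odd u
      rw [Nat.odd_iff] at this
      omega
    -- the Jacobi symbols are ±1
    have hjpm : ∀ (b : ℕ) (z : ℕ), z ∈ S → Nat.Coprime b N →
        jacobiSym (z : ℤ) b = 1 ∨ jacobiSym (z : ℤ) b = -1 := by
      intro b z hz hco
      apply jacobiSym.eq_one_or_neg_one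
      have hzdvd : z ∣ N := dvd_trans (hzP z hz) ⟨4, by rw [hN]; ring⟩
      have : Nat.Coprime z b := (Nat.Coprime.coprime_dvd_right hzdvd hco).symm
      simpa [Int.gcd_natCast_natCast] using this
    have hjpm' : ∀ (u : (ZMod N)ˣ) (z : ℕ), z ∈ S →
        jacobiSym (z : ℤ) ((u : ZMod N)).val = 1 ∨
          jacobiSym (z : ℤ) ((u : ZMod N)).val = -1 :=
      fun u z hz => hjpm _ z hz (ZMod.val_coe_unit_coprime u)
    -- the pattern map
    set φ : (ZMod N)ˣ → (↥S → ZMod 2) :=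
      fun u z => ind2 (jacobiSym ((z : ℕ) : ℤ) ((u : ZMod N)).val) with hφ
    have hφmul : ∀ u v, φ (u * v) = φ u + φ v := by
      intro u v
      funext z
      have hval : ((↑(u * v) : ZMod N)).val % N
          = (((u : ZMod N)).val * ((v : ZMod N)).val) % N := by
        rw [Units.val_mul, ZMod.val_mul, Nat.mod_mod_of_dvd _ dvd_rfl]
      have hcongr : jacobiSym ((z : ℕ) : ℤ) ((↑(u * v) : ZMod N)).val
          = jacobiSym ((z : ℕ) : ℤ) (((u : ZMod N)).val * ((v : ZMod N)).val) :=
        jac_congr (hzN z z.2) (hval_odd (u * v)) ((hval_odd u).mul (hval_odd v)) hval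
      show ind2 _ = ind2 _ + ind2 _
      rw [hcongr, jacobiSym.mul_right' _ (hval_ne u) (hval_ne v)]
      exact ind2_mul (hjpm' u z z.2) (hjpm' v z z.2)
    -- the image subgroup
    set W : AddSubgroup (↥S → ZMod 2) :=
      { carrier := Set.range φ
        zero_mem' := by
          refine ⟨1, ?_⟩
          funext z
          show ind2 _ = 0
          have h1 : ((↑(1 : (ZMod N)ˣ) : ZMod N)).val = 1 := by
            rw [Units.val_one, ZMod.val_one]
          rw [h1, jacobiSym.one_right, ind2]
          simp
        add_mem' := by
          rintro _ _ ⟨u, rfl⟩ ⟨v, rfl⟩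
          exact ⟨u * v, hφmul u v⟩
        neg_mem' := by
          rintro _ ⟨u, rfl⟩
          refine ⟨u, ?_⟩
          funext z
          rw [Pi.neg_apply]
          exact (by decide : ∀ x : ZMod 2, x = -x) _ }
      with hW
    set vε : ↥S → ZMod 2 := fun z => ind2 (ε z) with hvε
    by_cases hmem : vε ∈ W
    · -- the pattern is realized on a unit, apply Dirichlet
      obtain ⟨u, hu⟩ := hmem
      have hJ : ∀ z (hz : z ∈ S), jacobiSym (z : ℤ) ((u : ZMod N)).val = ε z := by
        intro z hz
        have h := congrFun hu ⟨z, hz⟩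
        exact eq_of_ind2_eq (hjpm' u z hz) (hε z hz) h
      have hinf := Nat.infinite_setOfPred_prime_and_eq_mod (q := N) (a := (u : ZMod N)) u.isUnit
      refine Set.Infinite.mono ?_ hinf
      rintro p ⟨hpp, hpu⟩
      have hpm : p % N = ((u : ZMod N)).val := by rw [← ZMod.val_natCast, hpu]
      have hvo := hval_odd u
      rw [Nat.odd_iff] at hvo
      have hpodd : p % 2 = 1 := by
        have := Nat.mod_mod_of_dvd p h2N
        omega
      have hp2 : p ≠ 2 := by omega
      haveI hf : Fact p.Prime := ⟨hpp⟩
      refine ⟨hf, hp2, fun z hz => ?_⟩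
      rw [jacobiSym.legendreSym.to_jacobiSym]
      rw [jac_congr (hzN z hz) (Nat.odd_iff.mpr hpodd) (hval_odd u)
        (by rw [hpm, Nat.mod_eq_of_lt (ZMod.val_lt _)])]
      exact hJ z hz
    · -- impossible: find a subset with square product
      exfalso
      have hmem' : vε ∉ AddSubgroup.toZModSubmodule 2 W := by
        rwa [AddSubgroup.mem_toZModSubmodule]
      obtain ⟨f, hf0, hfbot⟩ :=
        Submodule.exists_dual_map_eq_bot_of_notMem hmem' inferInstance
      set c : ↥S → ZMod 2 := fun z => f (fun j => if z = j then 1 else 0) with hc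
      have hfeval : ∀ v : ↥S → ZMod 2, f v = ∑ z : ↥S, v z * c z := by
        intro v
        conv_lhs => rw [pi_eq_sum_univ v]
        rw [map_sum]
        exact Finset.sum_congr rfl fun z _ => by rw [map_smul, smul_eq_mul]
      have h01 : ∀ a : ZMod 2, a = 0 ∨ a = 1 := by decide
      have hc01 : ∀ z : ↥S, c z = 0 ∨ c z = 1 := fun z => h01 (c z)
      have hT0 : ∀ u : (ZMod N)ˣ, ∑ z : ↥S, φ u z * c z = 0 := by
        intro u
        have hmemW : φ u ∈ W := ⟨u, rfl⟩
        have hfz : f (φ u) = 0 := by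
          have h := Submodule.mem_map_of_mem (f := f)
            ((AddSubgroup.mem_toZModSubmodule _).mpr hmemW)
          rw [hfbot, Submodule.mem_bot] at h
          exact h
        rw [hfeval] at hfz
        exact hfz
      set T₀ : Finset ↥S := Finset.univ.filter (fun z => c z = 1) with hT₀
      set T : Finset ℕ := T₀.image Subtype.val with hT
      have hTsub : T ⊆ S := by
        intro x hx
        rw [hT, Finset.mem_image] at hx
        obtain ⟨z, _, rfl⟩ := hx
        exact z.2
      have hTne : T.Nonempty := by
        rw [Finset.image_nonempty]
        by_contra h
        rw [Finset.not_nonempty_iff_eq_empty] at h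
        apply hf0
        rw [hfeval]
        refine Finset.sum_eq_zero fun z _ => ?_
        have hz0 : c z = 0 := by
          rcases hc01 z with h0 | h1
          · exact h0
          · have hzT : z ∈ T₀ := by
              rw [hT₀]
              exact Finset.mem_filter.mpr ⟨Finset.mem_univ z, h1⟩
            rw [h] at hzT
            exact absurd hzT (Finset.notMem_empty z)
        rw [hz0, mul_zero]
      set m : ℕ := ∏ z ∈ T, z with hm
      have hmdvdP : m ∣ P := Finset.prod_dvd_prod_of_subset T S _ hTsub
      have hmdvd : m ∣ N := dvd_trans hmdvdP ⟨4, by rw [hN]; ring⟩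
      have h4m : 4 * m ∣ N := mul_dvd_mul_left 4 hmdvdP
      have hm0 : 0 < m := Finset.prod_pos fun z hz => hpos z (hTsub hz)
      have hmns : ¬ IsSquare m := hsq T hTsub hTne
      -- J(m | b) = 1 for all odd b coprime to N
      have hJm : ∀ u : (ZMod N)ˣ, jacobiSym (m : ℤ) ((u : ZMod N)).val = 1 := by
        intro u
        set b := ((u : ZMod N)).val with hb
        have hcast : ((m : ℕ) : ℤ) = ∏ z ∈ T, (z : ℤ) := by rw [hm]; push_cast; rfl
        have hprod : jacobiSym (m : ℤ) b = ∏ z ∈ T, jacobiSym (z : ℤ) b := by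
          rw [hcast, jacobi_prod]
        have hTpm : ∀ z ∈ T, jacobiSym (z : ℤ) b = 1 ∨ jacobiSym (z : ℤ) b = -1 :=
          fun z hz => hjpm' u z (hTsub hz)
        obtain ⟨hps, hind⟩ := ind2_prod T _ hTpm
        have hsum : ∑ z ∈ T, ind2 (jacobiSym (z : ℤ) b) = ∑ z : ↥S, φ u z * c z := by
          rw [hT, Finset.sum_image (fun x _ y _ h => Subtype.ext h), hT₀, Finset.sum_filter]
          refine Finset.sum_congr rfl fun z _ => ?_
          rcases hc01 z with h0 | h1
          · rw [h0, mul_zero, if_neg (by decide : ¬(0 : ZMod 2) = 1)]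
          · rw [h1, mul_one, if_pos rfl]
        rw [hT0 u] at hsum
        rw [hsum] at hind
        rw [← hprod] at hps hind
        rcases hps with h | h
        · exact h
        · exfalso
          rw [h] at hind
          exact absurd hind (by decide)
      obtain ⟨b, hbodd, hbN, hJb⟩ := exists_jacobi_neg_one hN0 hN4 hmdvd hm0 hmns
      set u := ZMod.unitOfCoprime b hbN with hu
      have hval : ((u : ZMod N)).val % N = b % N := by
        rw [hu, ZMod.coe_unitOfCoprime, ZMod.val_natCast, Nat.mod_mod_of_dvd _ dvd_rfl]
      have heq : jacobiSym (m : ℤ) ((u : ZMod N)).val = jacobiSym (m : ℤ) b :=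
        jac_congr h4m (hval_odd u) hbodd hval
      rw [hJm u, hJb] at heq
      exact absurd heq (by decide)
  · -- reverse direction
    intro hpat T hTS hTne hsqT
    obtain ⟨k, hk⟩ := hsqT
    obtain ⟨z0, hz0⟩ := hTne
    set ε : ℕ → ℤ := fun z => if z = z0 then -1 else 1 with hεdef
    have hε : ∀ z ∈ S, ε z = 1 ∨ ε z = -1 := by
      intro z _
      by_cases h : z = z0 <;> simp [hεdef, h]
    obtain ⟨p, hp⟩ := (hpat ε hε).nonempty
    obtain ⟨hpp, hp2, hall⟩ := hp
    haveI := hpp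
    have h1 : legendreSym p (∏ z ∈ T, (z : ℤ)) = ∏ z ∈ T, ε z := by
      rw [legendre_prod]
      exact Finset.prod_congr rfl fun z hz => hall z (hTS hz)
    have h2 : ∏ z ∈ T, ε z = -1 := by
      rw [hεdef]
      rw [Finset.prod_ite_eq' T z0 (fun _ => (-1 : ℤ)), if_pos hz0]
    have h3 : (∏ z ∈ T, (z : ℤ)) = (k : ℤ) * (k : ℤ) := by
      have h := congrArg (Nat.cast : ℕ → ℤ) hk
      push_cast at h
      exact h
    rw [h3, legendreSym.mul, h2] at h1
    nlinarith [sq_nonneg (legendreSym p (k : ℤ))]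
end
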